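/- (Splitting of a perfect dyadic Calderón–Zygmund operator.) Let T be a perfect dyadic Calderón–Zygmund operator. Then for every f ∈ S and every lacunary tile Q ∈ 𝐏⁺ one has the exact identity ⟨Tf, φ_Q⟩ = ⟨Tφ_Q, φ_Q⟩·Wf(Q) + W(T1)(Q)·[f]_{I_Q} + Σ_{P∈𝐏⁺} W(T*1)(P)·Wf(P)·[φ_Q]_{I_P}, where T1 and T*1 denote T and its transpose T* applied to the constant function 1 on [0, 2^M]. -/

import Mathlib

open MeasureTheory Set

noncomputable section

namespace Dyadic

/-- A dyadic interval/lacunary tile: `I = [j·2^k, (j+1)·2^k)` with `-M ≤ k ≤ M`,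
`I ⊆ [0, 2^M)`.  Lacunary tiles are in bijection with dyadic intervals, so we
identify the tile `P⁺(I) = I × [1/|I|, 2/|I|)` with the data of `I`. -/
structure Tile (M : ℕ) where
  j : ℤ
  k : ℤ
  hk_lb : -(M : ℤ) ≤ k
  hk_ub : k ≤ (M : ℤ)
  hj : 0 ≤ j
  hsub : ((j : ℝ) + 1) * 2 ^ k ≤ 2 ^ (M : ℤ)

variable {M : ℕ}

/-- The side length `|I_P| = 2^k` of the spatial interval of the tile. -/
def Tile.len (P : Tile M) : ℝ := 2 ^ P.k

/-- The spatial interval `I_P` of the tile. -/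
def Tile.ival (P : Tile M) : Set ℝ :=
  Ico ((P.j : ℝ) * 2 ^ P.k) (((P.j : ℝ) + 1) * 2 ^ P.k)

/-- The order `P ≤′ Q` on lacunary tiles: `I_P ⊆ I_Q`. -/
def Tile.le (P Q : Tile M) : Prop := P.ival ⊆ Q.ival

/-- A (lacunary) tree: a collection of tiles together with a top tile. -/
structure Tree (M : ℕ) where
  tiles : Set (Tile M)
  top : Tile M
  top_mem : top ∈ tiles
  le_top : ∀ P ∈ tiles, P.le top

/-- `|I_T|`, the length of the spatial interval of the top of the tree. -/
def Tree.len (T : Tree M) : ℝ := T.top.len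

/-- A collection of tiles is convex if `P₁ ≤′ P ≤′ P₂` with `P₁, P₂` in the
collection implies `P` is in the collection. -/
def IsConvex (PP : Set (Tile M)) : Prop :=
  ∀ P₁ ∈ PP, ∀ P₂ ∈ PP, ∀ P : Tile M, P₁.le P → P.le P₂ → P ∈ PP

/-- The size `‖a‖_{size(T)} = (1/|I_T|) Σ_{P ∈ T} a(P)` of `a` on a tree `T`. -/
def treeSize (a : Tile M → ℝ) (T : Tree M) : ℝ :=
  (∑ᶠ P ∈ T.tiles, a P) / T.len

/-- The maximal size `‖a‖_{size*(PP)}`: the supremum of `‖a‖_{size(T)}` over all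
convex trees `T ⊆ PP` (by convention `0` if there are none). -/
def maxSize (a : Tile M → ℝ) (PP : Set (Tile M)) : ℝ :=
  sSup (insert 0 {s : ℝ | ∃ T : Tree M, T.tiles ⊆ PP ∧ IsConvex T.tiles ∧ s = treeSize a T})

/-- The complete tree `Tree(P) = {Q : Q ≤′ P}`. -/
def cTree (P : Tile M) : Set (Tile M) := {Q : Tile M | Q.le P}

/-- A tree `T` is complete with respect to `PP` if `T = Tree(P_T) ∩ PP`. -/
def Tree.IsCompleteIn (T : Tree M) (PP : Set (Tile M)) : Prop :=
  T.tiles = cTree T.top ∩ PP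

/-- `QQ` is an `α`-packing of the tree `T`: `QQ ⊆ T` and `Σ_{P ∈ QQ} |I_P| ≤ α|I_T|`. -/
def IsPacking (α : ℝ) (QQ : Set (Tile M)) (T : Tree M) : Prop :=
  QQ ⊆ T.tiles ∧ (∑ᶠ P ∈ QQ, Tile.len P) ≤ α * T.len

/-- `QQ` is a uniform `α`-packing of the tree `T`:
`Σ_{P ∈ QQ, I_P ⊆ J} |I_P| ≤ α|J|` for every dyadic interval `J`. -/
def IsUniformPacking (α : ℝ) (QQ : Set (Tile M)) (T : Tree M) : Prop :=
  QQ ⊆ T.tiles ∧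
    ∀ J : Tile M, (∑ᶠ P ∈ {P ∈ QQ | P.ival ⊆ J.ival}, Tile.len P) ≤ α * J.len

/-- Left half of the spatial interval. -/
def Tile.left (P : Tile M) : Set ℝ :=
  Ico ((P.j : ℝ) * 2 ^ P.k) (((P.j : ℝ) + 1 / 2) * 2 ^ P.k)

/-- Right half of the spatial interval. -/
def Tile.right (P : Tile M) : Set ℝ :=
  Ico (((P.j : ℝ) + 1 / 2) * 2 ^ P.k) (((P.j : ℝ) + 1) * 2 ^ P.k)

/-- The (mother) Haar wavelet `φ_P = |I_P|^{-1/2}(χ_{I_l} - χ_{I_r})`. -/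
def Tile.haar (P : Tile M) : ℝ → ℝ := fun x =>
  (Real.sqrt P.len)⁻¹ * (P.left.indicator 1 x - P.right.indicator 1 x)

/-- The Haar (wavelet) coefficient `Wf(P) = ⟨f, φ_P⟩`. -/
def waveCoeff (f : ℝ → ℝ) (P : Tile M) : ℝ := ∫ x, f x * P.haar x

/-- The average `[f]_{I_P} = (1/|I_P|)∫_{I_P} f`. -/
def tileAvg (f : ℝ → ℝ) (P : Tile M) : ℝ := (∫ x in P.ival, f x) / P.len

/-- The mean `‖f‖_{mean(P)} = (1/|I_P|)∫_{I_P} |f|`. -/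
def tileMean (f : ℝ → ℝ) (P : Tile M) : ℝ := (∫ x in P.ival, |f x|) / P.len

/-- The maximal mean `‖f‖_{mean*(PP)} = sup_{P ∈ PP} ‖f‖_{mean(P)}`. -/
def maxMean (f : ℝ → ℝ) (PP : Set (Tile M)) : ℝ :=
  sSup (insert 0 (tileMean f '' PP))

/-- The dyadic BMO norm `‖f‖_{BMO} = ‖|Wf|²‖_{size*(PP⁺)}^{1/2}`. -/
def bmoNorm (M : ℕ) (f : ℝ → ℝ) : ℝ :=
  Real.sqrt (maxSize (fun P : Tile M => waveCoeff f P ^ 2) univ)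

/-- The grid interval `[j·2^{-M}, (j+1)·2^{-M})` at the finest scale. -/
def gridIval (M : ℕ) (j : ℤ) : Set ℝ :=
  Ico ((j : ℝ) * 2 ^ (-(M : ℤ))) (((j : ℝ) + 1) * 2 ^ (-(M : ℤ)))

/-- A dyadic test function: supported on `[0, 2^M)` and constant on every dyadic
interval of length `2^{-M}`. -/
def IsTestFun (M : ℕ) (f : ℝ → ℝ) : Prop :=
  (∀ x : ℝ, x ∉ Ico (0 : ℝ) (2 ^ (M : ℤ)) → f x = 0) ∧
    ∀ j : ℤ, ∀ x ∈ gridIval M j, ∀ y ∈ gridIval M j, f x = f y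

/-- The `L²` norm. -/
def l2Norm (f : ℝ → ℝ) : ℝ := Real.sqrt (∫ x, f x ^ 2)

/-- The `L^∞` norm (as a supremum of values; adequate for test functions). -/
def supNorm (f : ℝ → ℝ) : ℝ := ⨆ x : ℝ, |f x|

/-- The weak `L^r` quasinorm `sup_{λ>0} λ |{|h| ≥ λ}|^{1/r}`. -/
def weakNorm (r : ℝ) (h : ℝ → ℝ) : ℝ :=
  sSup {s : ℝ | ∃ l : ℝ, 0 < l ∧ s = l * (volume {x : ℝ | l ≤ |h x|}).toReal ^ (1 / r)}

/-- The phase space projection `Π_T f = Σ_{P ∈ T} ⟨f, φ_P⟩ φ_P` onto a tree. -/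
def treeProj (T : Tree M) (f : ℝ → ℝ) : ℝ → ℝ := fun x =>
  ∑ᶠ P ∈ T.tiles, waveCoeff f P * P.haar x

/-- The high-low paraproduct `π_hl(f,g) = Σ_P Wf(P) [g]_P φ_P`. -/
def paraHL (M : ℕ) (f g : ℝ → ℝ) : ℝ → ℝ := fun x =>
  ∑ᶠ P : Tile M, waveCoeff f P * tileAvg g P * P.haar x

/-- The low-high paraproduct `π_lh(f,g) = Σ_P [f]_P Wg(P) φ_P`. -/
def paraLH (M : ℕ) (f g : ℝ → ℝ) : ℝ → ℝ := fun x =>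
  ∑ᶠ P : Tile M, tileAvg f P * waveCoeff g P * P.haar x

/-- The high-high paraproduct `π_hh(f,g) = Σ_P Wf(P) Wg(P) χ_{I_P}/|I_P|`. -/
def paraHH (M : ℕ) (f g : ℝ → ℝ) : ℝ → ℝ := fun x =>
  ∑ᶠ P : Tile M, waveCoeff f P * waveCoeff g P * P.ival.indicator 1 x / P.len

/-- The constant function `1` on `[0, 2^M)`. -/
def oneFn (M : ℕ) : ℝ → ℝ := (Ico (0 : ℝ) (2 ^ (M : ℤ))).indicator 1

/-- A perfect dyadic Calderón–Zygmund operator, recorded via its kernel `K` and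
kernel constant `A₀`. -/
structure PDCZ (M : ℕ) where
  K : ℝ → ℝ → ℝ
  A₀ : ℝ
  hA₀ : 0 < A₀
  meas : Measurable (Function.uncurry K)
  bound : ∀ x y : ℝ, x ≠ y → |K x y| ≤ A₀ / |x - y|
  perfectX : ∀ I J : Tile M, Disjoint I.ival J.ival →
    ∀ x ∈ I.ival, ∀ x' ∈ I.ival, ∀ y ∈ J.ival, K x y = K x' y
  perfectY : ∀ I J : Tile M, Disjoint I.ival J.ival →
    ∀ x ∈ I.ival, ∀ x' ∈ I.ival, ∀ y ∈ J.ival, K y x = K y x'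
  diag : ∀ I : Tile M, I.k = -(M : ℤ) → ∀ x ∈ I.ival, ∀ y ∈ I.ival, K x y = 0
  corner₁ : ∀ x ∈ Ico (0 : ℝ) (2 ^ ((M : ℤ) - 1)),
    ∀ y ∈ Ico ((2 : ℝ) ^ ((M : ℤ) - 1)) (2 ^ (M : ℤ)), K x y = 0
  corner₂ : ∀ x ∈ Ico ((2 : ℝ) ^ ((M : ℤ) - 1)) (2 ^ (M : ℤ)),
    ∀ y ∈ Ico (0 : ℝ) (2 ^ ((M : ℤ) - 1)), K x y = 0

/-- `Tf(x) = ∫ K(x,y) f(y) dy`. -/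
def PDCZ.app (Op : PDCZ M) (f : ℝ → ℝ) : ℝ → ℝ := fun x => ∫ y, Op.K x y * f y

/-- The transpose `T*f(x) = ∫ K(y,x) f(y) dy`. -/
def PDCZ.appT (Op : PDCZ M) (f : ℝ → ℝ) : ℝ → ℝ := fun x => ∫ y, Op.K y x * f y

/-- Complex-valued Haar coefficient. -/
def waveCoeffC (b : ℝ → ℂ) (P : Tile M) : ℂ := ∫ x, b x * (P.haar x : ℂ)

/-- Complex-valued average. -/
def tileAvgC (b : ℝ → ℂ) (P : Tile M) : ℂ := (∫ x in P.ival, b x) / (P.len : ℂ)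

/-- BMO norm of a complex-valued function. -/
def bmoNormC (M : ℕ) (b : ℝ → ℂ) : ℝ :=
  Real.sqrt (maxSize (fun P : Tile M => ‖waveCoeffC b P‖ ^ 2) univ)

/-- Complex-valued dyadic test functions. -/
def IsTestFunC (M : ℕ) (b : ℝ → ℂ) : Prop :=
  (∀ x : ℝ, x ∉ Ico (0 : ℝ) (2 ^ (M : ℤ)) → b x = 0) ∧
    ∀ j : ℤ, ∀ x ∈ gridIval M j, ∀ y ∈ gridIval M j, b x = b y

/-- The operator applied to a complex-valued function. -/
def PDCZ.appC (Op : PDCZ M) (b : ℝ → ℂ) : ℝ → ℂ := fun x => ∫ y, (Op.K x y : ℂ) * b y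



/-! ### Auxiliary development for statement 14 -/

section Aux14

variable {M : ℕ}

/-- Number of grid cells of size `2^{-M-1}` in `[0, 2^M)`. -/
def NN (M : ℕ) : ℕ := 2 ^ (2 * M + 1)

/-- The fine grid scale `δ = 2^{-M-1}`. -/
def del (M : ℕ) : ℝ := (2 : ℝ) ^ (-(M : ℤ) - 1)

/-- The grid point `j·δ`. -/
def pt (M : ℕ) (j : ℕ) : ℝ := j * del M

/-- The fine grid cell `[jδ, (j+1)δ)`. -/
def cell (M : ℕ) (j : ℕ) : Set ℝ := Ico (pt M j) (pt M (j + 1))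

lemma del_pos : 0 < del M := by
  have : (0:ℝ) < 2 := by norm_num
  exact zpow_pos this _

lemma NN_mul_del : (NN M : ℝ) * del M = 2 ^ (M : ℤ) := by
  rw [NN, del]
  push_cast
  rw [← zpow_natCast (2:ℝ) (2*M+1), ← zpow_add₀ (by norm_num : (2:ℝ) ≠ 0)]
  congr 1
  push_cast
  ring

lemma pt_mono {u v : ℕ} (h : u ≤ v) : pt M u ≤ pt M v :=
  mul_le_mul_of_nonneg_right (by exact_mod_cast h) (del_pos (M := M)).le

lemma pt_strict {u v : ℕ} (h : u < v) : pt M u < pt M v :=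
  mul_lt_mul_of_pos_right (by exact_mod_cast h) (del_pos (M := M))

lemma pt_lt_pt_iff {u v : ℕ} : pt M u < pt M v ↔ u < v := by
  constructor
  · intro h
    by_contra hc
    exact absurd (pt_mono (Nat.le_of_not_lt hc)) (_root_.not_le.mpr h)
  · exact pt_strict

lemma pt_le_pt_iff {u v : ℕ} : pt M u ≤ pt M v ↔ u ≤ v := by
  constructor
  · intro h
    by_contra hc
    exact absurd (pt_strict (Nat.lt_of_not_le hc)) (_root_.not_lt.mpr h)
  · exact pt_mono

lemma pt_mem_Ico_iff {j u v : ℕ} :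
    pt M j ∈ Ico (pt M u) (pt M v) ↔ u ≤ j ∧ j < v := by
  simp [mem_Ico, pt_le_pt_iff, pt_lt_pt_iff]

lemma mem_cell_self (j : ℕ) : pt M j ∈ cell M j :=
  ⟨_root_.le_refl _, pt_strict (Nat.lt_succ_self j)⟩

/-- Every `x ∈ [0, 2^M)` lies in exactly one fine cell. -/
lemma exists_cell {x : ℝ} (hx : x ∈ Ico (0:ℝ) (2 ^ (M : ℤ))) :
    ∃ j < NN M, x ∈ cell M j := by
  obtain ⟨hx0, hx1⟩ := hx
  have hd := del_pos (M := M)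
  set q : ℤ := ⌊x / del M⌋ with hq
  have hq0 : 0 ≤ q := Int.floor_nonneg.mpr (div_nonneg hx0 hd.le)
  have hqlt : q < (NN M : ℤ) := by
    have : x / del M < (NN M : ℝ) := by
      rw [div_lt_iff₀ hd]
      calc x < 2 ^ (M : ℤ) := hx1
      _ = (NN M : ℝ) * del M := NN_mul_del.symm
    have := Int.floor_lt.mpr (by exact_mod_cast this)
    exact_mod_cast this
  have hfl : (q : ℝ) ≤ x / del M := Int.floor_le _
  have hfu : x / del M < (q : ℝ) + 1 := Int.lt_floor_add_one _
  have hcast : ((q.toNat : ℕ) : ℝ) = (q : ℝ) := by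
    exact_mod_cast congrArg (Int.cast : ℤ → ℝ) (Int.toNat_of_nonneg hq0)
  refine ⟨q.toNat, by omega, ?_, ?_⟩
  · show (q.toNat : ℝ) * del M ≤ x
    rw [hcast]
    calc (q : ℝ) * del M ≤ (x / del M) * del M := by gcongr
    _ = x := div_mul_cancel₀ _ hd.ne'
  · show x < ((q.toNat + 1 : ℕ) : ℝ) * del M
    push_cast
    rw [hcast]
    calc x = (x / del M) * del M := (div_mul_cancel₀ _ hd.ne').symm
    _ < ((q:ℝ) + 1) * del M := by gcongr

/-- The dyadic exponent of a tile at the fine grid scale: `|I_P| = 2^e · δ`. -/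
def Tile.e (P : Tile M) : ℕ := (P.k + M + 1).toNat

/-- The offset of a tile in fine-grid cells. -/
def Tile.a (P : Tile M) : ℕ := P.j.toNat * 2 ^ P.e

/-- The block of fine-grid cells of a tile. -/
def Tile.bk (P : Tile M) : Finset ℕ := Finset.Ico P.a (P.a + 2 ^ P.e)

def Tile.bkL (P : Tile M) : Finset ℕ := Finset.Ico P.a (P.a + 2 ^ (P.e - 1))

def Tile.bkR (P : Tile M) : Finset ℕ :=
  Finset.Ico (P.a + 2 ^ (P.e - 1)) (P.a + 2 ^ P.e)

lemma Tile.e_pos (P : Tile M) : 1 ≤ P.e := by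
  have := P.hk_lb; unfold Tile.e; omega

lemma Tile.k_eq (P : Tile M) : P.k = (P.e : ℤ) - (M + 1) := by
  have := P.hk_lb; unfold Tile.e; omega

lemma Tile.a_cast (P : Tile M) : (P.a : ℝ) = (P.j : ℝ) * 2 ^ P.e := by
  have h : ((P.j.toNat : ℕ) : ℝ) = (P.j : ℝ) := by
    exact_mod_cast congrArg (Int.cast : ℤ → ℝ) (Int.toNat_of_nonneg P.hj)
  unfold Tile.a
  push_cast
  rw [h]

lemma Tile.two_zpow_k (P : Tile M) : (2:ℝ) ^ P.k = 2 ^ P.e * del M := by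
  rw [P.k_eq, del, show (P.e:ℤ) - ((M:ℤ) + 1) = (P.e:ℤ) + (-(M:ℤ) - 1) by ring,
    zpow_add₀ (by norm_num : (2:ℝ) ≠ 0), zpow_natCast]

lemma Tile.len_eq (P : Tile M) : P.len = 2 ^ P.e * del M := P.two_zpow_k

lemma Tile.len_pos (P : Tile M) : 0 < P.len := by
  rw [P.len_eq]; exact mul_pos (by positivity) del_pos

lemma lt_add_pow (a e : ℕ) : a < a + 2 ^ e :=
  Nat.lt_add_of_pos_right (by positivity)

lemma Tile.ival_eq (P : Tile M) : P.ival = Ico (pt M P.a) (pt M (P.a + 2 ^ P.e)) := by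
  have h1 : (P.j : ℝ) * 2 ^ P.k = pt M P.a := by
    rw [pt, P.a_cast, P.two_zpow_k]; ring
  have h2 : ((P.j : ℝ) + 1) * 2 ^ P.k = pt M (P.a + 2 ^ P.e) := by
    rw [pt, P.two_zpow_k]; push_cast [P.a_cast]; ring
  rw [Tile.ival, h1, h2]

lemma Tile.bk_in_range (P : Tile M) : P.a + 2 ^ P.e ≤ NN M := by
  have h2 : ((P.a + 2 ^ P.e : ℕ) : ℝ) = ((P.j : ℝ) + 1) * 2 ^ P.e := by
    push_cast; rw [P.a_cast]; ring
  have h3 : ((P.a + 2 ^ P.e : ℕ) : ℝ) * del M ≤ (NN M : ℝ) * del M := by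
    rw [h2, NN_mul_del, _root_.mul_assoc, ← P.two_zpow_k]
    exact P.hsub
  exact_mod_cast le_of_mul_le_mul_right h3 del_pos

lemma Tile.bk_subset_range (P : Tile M) : P.bk ⊆ Finset.range (NN M) := by
  intro j hj
  rw [Finset.mem_range]
  rw [Tile.bk, Finset.mem_Ico] at hj
  have := P.bk_in_range
  omega

lemma Tile.dvd_a (P : Tile M) : 2 ^ P.e ∣ P.a := dvd_mul_left _ _

lemma Tile.ext_ae {P R : Tile M} (ha : P.a = R.a) (he : P.e = R.e) : P = R := by
  have hk : P.k = R.k := by rw [P.k_eq, R.k_eq, he]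
  have hj : P.j = R.j := by
    unfold Tile.a at ha
    rw [he] at ha
    have h1 : P.j.toNat = R.j.toNat := Nat.eq_of_mul_eq_mul_right (by positivity) ha
    have := P.hj; have := R.hj
    omega
  cases P; cases R
  simp_all

lemma mem_bk_iff {P : Tile M} {j : ℕ} : j ∈ P.bk ↔ pt M j ∈ P.ival := by
  rw [P.ival_eq, pt_mem_Ico_iff, Tile.bk, Finset.mem_Ico]

lemma cell_subset_of_mem_bk {P : Tile M} {j : ℕ} (hj : j ∈ P.bk) :
    cell M j ⊆ P.ival := by
  rw [Tile.bk, Finset.mem_Ico] at hj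
  rw [P.ival_eq, cell]
  exact Ico_subset_Ico (pt_mono hj.1) (pt_mono hj.2)

lemma cell_disjoint_of_not_mem_bk {P : Tile M} {j : ℕ} (hj : j ∉ P.bk) :
    Disjoint (cell M j) P.ival := by
  rw [Tile.bk, Finset.mem_Ico, not_and_or, _root_.not_le, _root_.not_lt] at hj
  rw [P.ival_eq, cell, Set.Ico_disjoint_Ico]
  rcases hj with h | h
  · exact _root_.le_trans (min_le_left _ _) (le_max_of_le_right (pt_mono h))
  · exact _root_.le_trans (min_le_right _ _) (le_max_of_le_left (pt_mono h))

lemma pt_min (u v : ℕ) : min (pt M u) (pt M v) = pt M (min u v) := by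
  rcases le_total u v with h | h
  · rw [min_eq_left (pt_mono h), min_eq_left h]
  · rw [min_eq_right (pt_mono h), min_eq_right h]

lemma pt_max (u v : ℕ) : max (pt M u) (pt M v) = pt M (max u v) := by
  rcases le_total u v with h | h
  · rw [max_eq_right (pt_mono h), max_eq_right h]
  · rw [max_eq_left (pt_mono h), max_eq_left h]

lemma ival_subset_iff {P R : Tile M} : P.ival ⊆ R.ival ↔ P.bk ⊆ R.bk := by
  rw [P.ival_eq, R.ival_eq,
    Set.Ico_subset_Ico_iff (pt_strict (lt_add_pow P.a P.e)),
    pt_le_pt_iff, pt_le_pt_iff, Tile.bk, Tile.bk,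
    Finset.Ico_subset_Ico_iff (lt_add_pow P.a P.e)]

lemma ival_disjoint_iff {P R : Tile M} : Disjoint P.ival R.ival ↔ Disjoint P.bk R.bk := by
  rw [P.ival_eq, R.ival_eq, Set.Ico_disjoint_Ico, pt_min, pt_max, pt_le_pt_iff]
  constructor
  · intro h
    rw [Finset.disjoint_left]
    intro j hj hj'
    rw [Tile.bk, Finset.mem_Ico] at hj hj'
    omega
  · intro h
    by_contra hc
    push_neg at hc
    have h1 : max P.a R.a ∈ P.bk := by
      rw [Tile.bk, Finset.mem_Ico]; omega
    have h2 : max P.a R.a ∈ R.bk := by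
      rw [Tile.bk, Finset.mem_Ico]; omega
    exact Finset.disjoint_left.mp h h1 h2

lemma nat_dyadic_helper {a e a' e' : ℕ} (he : e ≤ e') (h : 2 ^ e ∣ a) (h' : 2 ^ e' ∣ a') :
    (a' ≤ a ∧ a + 2 ^ e ≤ a' + 2 ^ e') ∨ (a + 2 ^ e ≤ a') ∨ (a' + 2 ^ e' ≤ a) := by
  obtain ⟨t, rfl⟩ := h
  obtain ⟨s, rfl⟩ := h'
  set c : ℕ := 2 ^ (e' - e) with hcdef
  have hc : (2:ℕ) ^ e' = 2 ^ e * c := by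
    rw [hcdef, ← pow_add]; congr 1; omega
  rcases lt_or_ge t (c * s) with h1 | h1
  · right; left
    calc 2 ^ e * t + 2 ^ e = 2 ^ e * (t + 1) := by ring
    _ ≤ 2 ^ e * (c * s) := mul_le_mul_right (by omega) _
    _ = 2 ^ e' * s := by rw [hc]; ring
  rcases lt_or_ge t (c * s + c) with h2 | h2
  · left
    constructor
    · calc 2 ^ e' * s = 2 ^ e * (c * s) := by rw [hc]; ring
      _ ≤ 2 ^ e * t := mul_le_mul_right h1 _
    · calc 2 ^ e * t + 2 ^ e = 2 ^ e * (t + 1) := by ring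
      _ ≤ 2 ^ e * (c * s + c) := mul_le_mul_right (by omega) _
      _ = 2 ^ e' * s + 2 ^ e' := by rw [hc]; ring
  · right; right
    calc 2 ^ e' * s + 2 ^ e' = 2 ^ e * (c * s + c) := by rw [hc]; ring
    _ ≤ 2 ^ e * t := mul_le_mul_right h2 _

lemma Tile.tri (P R : Tile M) : P.bk ⊆ R.bk ∨ R.bk ⊆ P.bk ∨ Disjoint P.bk R.bk := by
  have key : ∀ S T : Tile M, S.e ≤ T.e →
      (S.bk ⊆ T.bk ∨ Disjoint S.bk T.bk) := by
    intro S T he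
    rcases nat_dyadic_helper he S.dvd_a T.dvd_a with h | h | h
    · left
      exact Finset.Ico_subset_Ico h.1 h.2
    · right
      rw [Finset.disjoint_left]
      intro j hj hj'
      rw [Tile.bk, Finset.mem_Ico] at hj hj'
      omega
    · right
      rw [Finset.disjoint_left]
      intro j hj hj'
      rw [Tile.bk, Finset.mem_Ico] at hj hj'
      omega
  rcases le_total P.e R.e with he | he
  · rcases key P R he with h | h
    · exact Or.inl h
    · exact Or.inr (Or.inr h)
  · rcases key R P he with h | h
    · exact Or.inr (Or.inl h)
    · exact Or.inr (Or.inr h.symm)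

lemma Tile.eq_of_bk_subset_subset {P R : Tile M} (h1 : P.bk ⊆ R.bk) (h2 : R.bk ⊆ P.bk) :
    P = R := by
  rw [Tile.bk, Tile.bk, Finset.Ico_subset_Ico_iff (lt_add_pow _ _)] at h1 h2
  have ha : P.a = R.a := _root_.le_antisymm h2.1 h1.1
  have hp : (2:ℕ) ^ P.e = 2 ^ R.e := by omega
  exact Tile.ext_ae ha (Nat.pow_right_injective (by norm_num) hp)

lemma Tile.e_le_of_bk_subset {P R : Tile M} (h : P.bk ⊆ R.bk) : P.e ≤ R.e := by
  rw [Tile.bk, Tile.bk, Finset.Ico_subset_Ico_iff (lt_add_pow _ _)] at h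
  have : (2:ℕ) ^ P.e ≤ 2 ^ R.e := by omega
  exact Nat.pow_le_pow_iff_right (by norm_num) |>.mp this

lemma Tile.e_ub (P : Tile M) : P.e ≤ 2 * M + 1 := by
  have := P.hk_ub; unfold Tile.e; omega

/-- Build a tile from fine-grid data. -/
def mkTile (M : ℕ) (a e : ℕ) (he1 : 1 ≤ e) (he2 : e ≤ 2 * M + 1) (hd : 2 ^ e ∣ a)
    (hr : a + 2 ^ e ≤ NN M) : Tile M where
  j := (a / 2 ^ e : ℕ)
  k := (e : ℤ) - (M + 1)
  hk_lb := by omega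
  hk_ub := by omega
  hj := Int.ofNat_nonneg _
  hsub := by
    have hz : (2:ℝ) ^ ((e:ℤ) - (M+1)) = 2 ^ e * del M := by
      rw [del, show (e:ℤ) - ((M:ℤ) + 1) = (e:ℤ) + (-(M:ℤ) - 1) by ring,
        zpow_add₀ (by norm_num : (2:ℝ) ≠ 0), zpow_natCast]
    have hnat : (a / 2 ^ e + 1) * 2 ^ e = a + 2 ^ e := by
      rw [_root_.add_mul, Nat.div_mul_cancel hd, _root_.one_mul]
    have hcast : (((a / 2 ^ e : ℕ) : ℝ) + 1) * 2 ^ e = ((a + 2 ^ e : ℕ) : ℝ) := by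
      push_cast [← hnat]; ring
    show ((((a / 2 ^ e : ℕ) : ℤ) : ℝ) + 1) * 2 ^ ((e:ℤ) - ((M:ℤ) + 1)) ≤ (2:ℝ) ^ (M:ℤ)
    rw [Int.cast_natCast, hz, ← _root_.mul_assoc, hcast]
    calc ((a + 2 ^ e : ℕ) : ℝ) * del M ≤ (NN M : ℝ) * del M :=
          mul_le_mul_of_nonneg_right (by exact_mod_cast hr) del_pos.le
    _ = 2 ^ (M : ℤ) := NN_mul_del

lemma mkTile_e (M : ℕ) (a e : ℕ) (he1 : 1 ≤ e) (he2 : e ≤ 2 * M + 1) (hd : 2 ^ e ∣ a)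
    (hr : a + 2 ^ e ≤ NN M) : (mkTile M a e he1 he2 hd hr).e = e := by
  unfold Tile.e mkTile; simp; omega

lemma mkTile_a (M : ℕ) (a e : ℕ) (he1 : 1 ≤ e) (he2 : e ≤ 2 * M + 1) (hd : 2 ^ e ∣ a)
    (hr : a + 2 ^ e ≤ NN M) : (mkTile M a e he1 he2 hd hr).a = a := by
  unfold Tile.a
  rw [mkTile_e]
  show a / 2 ^ e * 2 ^ e = a
  exact Nat.div_mul_cancel hd

lemma Tile.a_lt_NN (P : Tile M) : P.a < NN M := by
  have h1 : 0 < 2 ^ P.e := pow_pos (by norm_num) _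
  have h2 := P.bk_in_range
  omega

instance : Finite (Tile M) := by
  apply Finite.of_injective
    (fun P : Tile M => ((⟨P.a, P.a_lt_NN⟩, ⟨P.e, by have := P.e_ub; omega⟩) :
      Fin (NN M) × Fin (2 * M + 2)))
  intro P R h
  rw [Prod.mk.injEq, Fin.mk.injEq, Fin.mk.injEq] at h
  exact Tile.ext_ae h.1 h.2

noncomputable instance : Fintype (Tile M) := Fintype.ofFinite _

lemma two_pow_split {e : ℕ} (h : 1 ≤ e) : 2 ^ (e - 1) + 2 ^ (e - 1) = 2 ^ e := by
  have h2 : (2:ℕ) ^ e = 2 ^ (e - 1) * 2 := by rw [← _root_.pow_succ]; congr 1; omega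
  omega

lemma pow_half_le (e : ℕ) : (2:ℕ) ^ (e - 1) ≤ 2 ^ e :=
  Nat.pow_le_pow_right (by norm_num) (by omega)

/-- Left child of a tile. -/
def Tile.lc (P : Tile M) (h : 2 ≤ P.e) : Tile M :=
  mkTile M P.a (P.e - 1) (by omega) (by have := P.e_ub; omega)
    (dvd_trans (pow_dvd_pow 2 (by omega)) P.dvd_a)
    (by have h1 := P.bk_in_range; have h2 := pow_half_le P.e; omega)

/-- Right child of a tile. -/
def Tile.rc (P : Tile M) (h : 2 ≤ P.e) : Tile M :=
  mkTile M (P.a + 2 ^ (P.e - 1)) (P.e - 1) (by omega) (by have := P.e_ub; omega)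
    (dvd_add (dvd_trans (pow_dvd_pow 2 (by omega)) P.dvd_a) (pow_dvd_pow 2 (by omega)))
    (by have h1 := P.bk_in_range; have h2 := two_pow_split (by omega : 1 ≤ P.e); omega)

lemma Tile.lc_bk (P : Tile M) (h : 2 ≤ P.e) : (P.lc h).bk = P.bkL := by
  rw [Tile.bk, Tile.lc, mkTile_a, mkTile_e, Tile.bkL]

lemma Tile.rc_bk (P : Tile M) (h : 2 ≤ P.e) : (P.rc h).bk = P.bkR := by
  rw [Tile.bk, Tile.rc, mkTile_a, mkTile_e, Tile.bkR]
  congr 1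
  have := two_pow_split (by omega : 1 ≤ P.e)
  omega

lemma Tile.bkL_subset (P : Tile M) : P.bkL ⊆ P.bk :=
  Finset.Ico_subset_Ico le_rfl (by have := pow_half_le P.e; omega)

lemma Tile.bkR_subset (P : Tile M) : P.bkR ⊆ P.bk :=
  Finset.Ico_subset_Ico (Nat.le_add_right _ _) le_rfl

lemma Tile.bkL_disj_bkR (P : Tile M) : Disjoint P.bkL P.bkR := by
  rw [Finset.disjoint_left]
  intro i hi hi'
  rw [Tile.bkL, Finset.mem_Ico] at hi
  rw [Tile.bkR, Finset.mem_Ico] at hi'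
  omega

lemma Tile.mem_bkL_or_bkR {P : Tile M} {i : ℕ} (hi : i ∈ P.bk) :
    i ∈ P.bkL ∨ i ∈ P.bkR := by
  rw [Tile.bk, Finset.mem_Ico] at hi
  rw [Tile.bkL, Tile.bkR, Finset.mem_Ico, Finset.mem_Ico]
  omega

/-- A strict sub-tile lies in one of the halves. -/
lemma Tile.bk_subset_half {P Q : Tile M} (h : P.bk ⊆ Q.bk) (hne : P ≠ Q) :
    P.e < Q.e ∧ (P.bk ⊆ Q.bkL ∨ P.bk ⊆ Q.bkR) := by
  have he : P.e ≤ Q.e := Tile.e_le_of_bk_subset h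
  rw [Tile.bk, Tile.bk, Finset.Ico_subset_Ico_iff (lt_add_pow _ _)] at h
  have hlt : P.e < Q.e := by
    rcases eq_or_lt_of_le he with heq | hlt
    · exfalso
      apply hne
      apply Tile.ext_ae _ heq
      rw [heq] at h
      omega
    · exact hlt
  refine ⟨hlt, ?_⟩
  set m := Q.a + 2 ^ (Q.e - 1) with hm
  have hdm : 2 ^ P.e ∣ m :=
    dvd_add (dvd_trans (pow_dvd_pow 2 (by omega)) Q.dvd_a) (pow_dvd_pow 2 (by omega))
  obtain ⟨t, ht⟩ := P.dvd_a
  obtain ⟨u, hu⟩ := hdm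
  rcases lt_or_ge P.a m with hcase | hcase
  · left
    have htu : t < u := by
      rw [ht, hu] at hcase
      exact Nat.lt_of_mul_lt_mul_left hcase
    have : P.a + 2 ^ P.e ≤ m := by
      rw [ht, hu]
      calc 2 ^ P.e * t + 2 ^ P.e = 2 ^ P.e * (t + 1) := by ring
      _ ≤ 2 ^ P.e * u := mul_le_mul_right (by omega) _
    rw [Tile.bk, Tile.bkL]
    exact Finset.Ico_subset_Ico h.1 this
  · right
    rw [Tile.bk, Tile.bkR]
    exact Finset.Ico_subset_Ico hcase h.2

lemma Tile.left_eq (P : Tile M) :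
    P.left = Ico (pt M P.a) (pt M (P.a + 2 ^ (P.e - 1))) := by
  have h2r : (2:ℝ) ^ P.e = 2 * 2 ^ (P.e - 1) := by
    rw [← pow_succ']
    congr 1
    have := P.e_pos; omega
  have h1 : (P.j : ℝ) * 2 ^ P.k = pt M P.a := by
    rw [pt, P.a_cast, P.two_zpow_k]; ring
  have h2 : ((P.j : ℝ) + 1 / 2) * 2 ^ P.k = pt M (P.a + 2 ^ (P.e - 1)) := by
    rw [pt, P.two_zpow_k]
    push_cast [P.a_cast]
    rw [h2r]
    ring
  rw [Tile.left, h1, h2]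

lemma Tile.right_eq (P : Tile M) :
    P.right = Ico (pt M (P.a + 2 ^ (P.e - 1))) (pt M (P.a + 2 ^ P.e)) := by
  have h2r : (2:ℝ) ^ P.e = 2 * 2 ^ (P.e - 1) := by
    rw [← pow_succ']
    congr 1
    have := P.e_pos; omega
  have h2 : ((P.j : ℝ) + 1 / 2) * 2 ^ P.k = pt M (P.a + 2 ^ (P.e - 1)) := by
    rw [pt, P.two_zpow_k]
    push_cast [P.a_cast]
    rw [h2r]
    ring
  have h3 : ((P.j : ℝ) + 1) * 2 ^ P.k = pt M (P.a + 2 ^ P.e) := by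
    rw [pt, P.two_zpow_k]; push_cast [P.a_cast]; ring
  rw [Tile.right, h2, h3]

lemma Tile.left_subset_ival (P : Tile M) : P.left ⊆ P.ival := by
  rw [P.left_eq, P.ival_eq]
  exact Ico_subset_Ico le_rfl (pt_mono (by have := pow_half_le P.e; omega))

lemma Tile.right_subset_ival (P : Tile M) : P.right ⊆ P.ival := by
  rw [P.right_eq, P.ival_eq]
  exact Ico_subset_Ico (pt_mono (Nat.le_add_right _ _)) le_rfl

lemma Tile.left_disj_right (P : Tile M) : Disjoint P.left P.right := by
  rw [P.left_eq, P.right_eq]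
  exact Set.Ico_disjoint_Ico_same

lemma Tile.haar_pos {P : Tile M} {x : ℝ} (hx : x ∈ P.left) :
    P.haar x = (Real.sqrt P.len)⁻¹ := by
  have hx' : x ∉ P.right := Set.disjoint_left.mp P.left_disj_right hx
  rw [Tile.haar, indicator_of_mem hx, indicator_of_notMem hx', Pi.one_apply]
  ring

lemma Tile.haar_neg {P : Tile M} {x : ℝ} (hx : x ∈ P.right) :
    P.haar x = -(Real.sqrt P.len)⁻¹ := by
  have hx' : x ∉ P.left := Set.disjoint_right.mp P.left_disj_right hx
  rw [Tile.haar, indicator_of_mem hx, indicator_of_notMem hx', Pi.one_apply]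
  ring

lemma Tile.haar_zero {P : Tile M} {x : ℝ} (hx : x ∉ P.ival) : P.haar x = 0 := by
  have h1 : x ∉ P.left := fun h => hx (P.left_subset_ival h)
  have h2 : x ∉ P.right := fun h => hx (P.right_subset_ival h)
  rw [Tile.haar, indicator_of_notMem h1, indicator_of_notMem h2]
  ring

/-- The sampled Haar function. -/
def hsamp (P : Tile M) (j : ℕ) : ℝ := P.haar (pt M j)

lemma cell_subset_left {P : Tile M} {j : ℕ} (hj : j ∈ P.bkL) : cell M j ⊆ P.left := by
  rw [Tile.bkL, Finset.mem_Ico] at hj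
  rw [P.left_eq, cell]
  exact Ico_subset_Ico (pt_mono hj.1) (pt_mono hj.2)

lemma cell_subset_right {P : Tile M} {j : ℕ} (hj : j ∈ P.bkR) : cell M j ⊆ P.right := by
  rw [Tile.bkR, Finset.mem_Ico] at hj
  rw [P.right_eq, cell]
  exact Ico_subset_Ico (pt_mono hj.1) (pt_mono hj.2)

lemma hsamp_left {P : Tile M} {j : ℕ} (hj : j ∈ P.bkL) :
    hsamp P j = (Real.sqrt P.len)⁻¹ :=
  Tile.haar_pos (cell_subset_left hj (mem_cell_self j))

lemma hsamp_right {P : Tile M} {j : ℕ} (hj : j ∈ P.bkR) :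
    hsamp P j = -(Real.sqrt P.len)⁻¹ :=
  Tile.haar_neg (cell_subset_right hj (mem_cell_self j))

lemma hsamp_zero {P : Tile M} {j : ℕ} (hj : j ∉ P.bk) : hsamp P j = 0 :=
  Tile.haar_zero (fun h => hj (mem_bk_iff.mpr h))

/-- The Haar function is constant on fine cells. -/
lemma haar_eq_hsamp {P : Tile M} {j : ℕ} {x : ℝ} (hx : x ∈ cell M j) :
    P.haar x = hsamp P j := by
  by_cases hj : j ∈ P.bk
  · rcases Tile.mem_bkL_or_bkR hj with h | h
    · rw [Tile.haar_pos (cell_subset_left h hx), hsamp_left h]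
    · rw [Tile.haar_neg (cell_subset_right h hx), hsamp_right h]
  · rw [Tile.haar_zero (Set.disjoint_left.mp (cell_disjoint_of_not_mem_bk hj) hx),
      hsamp_zero hj]

lemma pt_zero : pt M 0 = 0 := by simp [pt]

lemma pt_NN : pt M (NN M) = 2 ^ (M : ℤ) := NN_mul_del

lemma cell_subset_base {j : ℕ} (hj : j < NN M) :
    cell M j ⊆ Ico (0:ℝ) (2 ^ (M : ℤ)) := by
  rw [cell, ← pt_zero (M := M), ← pt_NN (M := M)]
  exact Ico_subset_Ico (pt_mono (Nat.zero_le _)) (pt_mono (by omega))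

lemma ival_subset_base (P : Tile M) : P.ival ⊆ Ico (0:ℝ) (2 ^ (M : ℤ)) := by
  rw [P.ival_eq, ← pt_zero (M := M), ← pt_NN (M := M)]
  exact Ico_subset_Ico (pt_mono (Nat.zero_le _)) (pt_mono P.bk_in_range)

/-- A fine step function: vanishes off `[0,2^M)` and is constant on fine cells. -/
def SFun (M : ℕ) (g : ℝ → ℝ) : Prop :=
  (∀ x ∉ Ico (0:ℝ) (2 ^ (M : ℤ)), g x = 0) ∧
    ∀ j < NN M, ∀ x ∈ cell M j, g x = g (pt M j)

lemma cell_measurable (j : ℕ) : MeasurableSet (cell M j) := by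
  rw [cell]; exact measurableSet_Ico

lemma cell_indicator_integrable (j : ℕ) (c : ℝ) :
    Integrable ((cell M j).indicator fun _ => c) := by
  rw [integrable_indicator_iff (cell_measurable j)]
  exact integrableOn_const (by rw [cell]; exact measure_Ico_lt_top.ne)

lemma SFun.repr {g : ℝ → ℝ} (hg : SFun M g) (x : ℝ) :
    g x = ∑ j ∈ Finset.range (NN M), (cell M j).indicator (fun _ => g (pt M j)) x := by
  by_cases hx : x ∈ Ico (0:ℝ) (2 ^ (M : ℤ))
  · obtain ⟨j0, hj0, hxj⟩ := exists_cell hx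
    rw [Finset.sum_eq_single j0]
    · rw [indicator_of_mem hxj]
      exact hg.2 j0 hj0 x hxj
    · intro j _ hne
      apply indicator_of_notMem
      intro hxj'
      rw [cell, mem_Ico] at hxj hxj'
      rcases Nat.lt_or_ge j j0 with h | h
      · have := pt_mono (M := M) (show j + 1 ≤ j0 by omega)
        linarith [hxj.1, hxj'.2]
      · have hne' : j0 < j := by omega
        have := pt_mono (M := M) (show j0 + 1 ≤ j by omega)
        linarith [hxj.2, hxj'.1]
    · intro h
      exact absurd (Finset.mem_range.mpr hj0) h
  · rw [hg.1 x hx]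
    symm
    apply Finset.sum_eq_zero
    intro j hj
    apply indicator_of_notMem
    intro hxj
    exact hx (cell_subset_base (Finset.mem_range.mp hj) hxj)

lemma SFun.integrable {g : ℝ → ℝ} (hg : SFun M g) : Integrable g := by
  have : g = fun x => ∑ j ∈ Finset.range (NN M),
      (cell M j).indicator (fun _ => g (pt M j)) x := funext fun x => hg.repr x
  rw [this]
  apply MeasureTheory.integrable_finset_sum
  intro j _
  exact cell_indicator_integrable j _

lemma vol_cell (j : ℕ) : (volume (cell M j)).toReal = del M := by
  rw [cell, Real.volume_Ico]
  have h : pt M (j + 1) - pt M j = del M := by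
    unfold pt; push_cast; ring
  rw [h, ENNReal.toReal_ofReal del_pos.le]

lemma SFun.integral {g : ℝ → ℝ} (hg : SFun M g) :
    ∫ x, g x = del M * ∑ j ∈ Finset.range (NN M), g (pt M j) := by
  have hrepr : ∀ x, g x = ∑ j ∈ Finset.range (NN M),
      (cell M j).indicator (fun _ => g (pt M j)) x := hg.repr
  rw [show (fun x => g x) = fun x => ∑ j ∈ Finset.range (NN M),
      (cell M j).indicator (fun _ => g (pt M j)) x from funext hrepr]
  rw [MeasureTheory.integral_finset_sum]
  · rw [Finset.mul_sum]
    apply Finset.sum_congr rfl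
    intro j _
    rw [MeasureTheory.integral_indicator_const _ (cell_measurable j)]
    rw [smul_eq_mul, measureReal_def, vol_cell]
  · intro j _
    exact cell_indicator_integrable j _

lemma SFun.mul {g h : ℝ → ℝ} (hg : SFun M g) (hh : SFun M h) :
    SFun M (fun x => g x * h x) := by
  constructor
  · intro x hx; show g x * h x = 0; rw [hg.1 x hx]; ring
  · intro j hj x hxj
    show g x * h x = g (pt M j) * h (pt M j)
    rw [hg.2 j hj x hxj, hh.2 j hj x hxj]

lemma SFun.indicator_ival {g : ℝ → ℝ} (hg : SFun M g) (P : Tile M) :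
    SFun M (P.ival.indicator g) := by
  constructor
  · intro x hx
    apply indicator_of_notMem
    intro hxi
    exact hx (ival_subset_base P hxi)
  · intro j hj x hxj
    by_cases hjb : j ∈ P.bk
    · rw [indicator_of_mem (cell_subset_of_mem_bk hjb hxj),
        indicator_of_mem (cell_subset_of_mem_bk hjb (mem_cell_self j))]
      exact hg.2 j hj x hxj
    · rw [indicator_of_notMem
        (Set.disjoint_left.mp (cell_disjoint_of_not_mem_bk hjb) hxj),
        indicator_of_notMem
        (Set.disjoint_left.mp (cell_disjoint_of_not_mem_bk hjb) (mem_cell_self j))]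

lemma SFun.setIntegral {g : ℝ → ℝ} (hg : SFun M g) (P : Tile M) :
    ∫ x in P.ival, g x = del M * ∑ j ∈ P.bk, g (pt M j) := by
  rw [← MeasureTheory.integral_indicator (by rw [P.ival_eq]; exact measurableSet_Ico),
    (hg.indicator_ival P).integral]
  congr 1
  rw [← Finset.sum_subset P.bk_subset_range
    (fun j _ hj => indicator_of_notMem (fun h => hj (mem_bk_iff.mpr h)) g)]
  apply Finset.sum_congr rfl
  intro j hj
  exact indicator_of_mem (mem_bk_iff.mp hj) g

lemma haar_sfun (P : Tile M) : SFun M P.haar := by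
  constructor
  · intro x hx
    exact Tile.haar_zero (fun h => hx (ival_subset_base P h))
  · intro j _ x hxj
    rw [haar_eq_hsamp hxj, hsamp]

lemma oneFn_sfun : SFun M (oneFn M) := by
  constructor
  · intro x hx
    exact indicator_of_notMem hx 1
  · intro j hj x hxj
    rw [oneFn, indicator_of_mem (cell_subset_base hj hxj),
      indicator_of_mem (cell_subset_base hj (mem_cell_self j))]
    rfl

lemma oneFn_pt {j : ℕ} (hj : j < NN M) : oneFn M (pt M j) = 1 :=
  indicator_of_mem (cell_subset_base hj (mem_cell_self j)) 1

lemma two_zpow_negM : (2:ℝ) ^ (-(M:ℤ)) = 2 * del M := by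
  rw [del, show -(M:ℤ) = 1 + (-(M:ℤ) - 1) by ring, zpow_add₀ (by norm_num : (2:ℝ) ≠ 0)]
  norm_num

lemma testFun_sfun {f : ℝ → ℝ} (hf : IsTestFun M f) : SFun M f := by
  constructor
  · exact hf.1
  · intro j _ x hxj
    set q := j / 2 with hq
    have hsub : cell M j ⊆ gridIval M (q : ℤ) := by
      rw [gridIval, two_zpow_negM, cell]
      have h1 : ((q : ℤ) : ℝ) * (2 * del M) = pt M (2 * q) := by
        rw [pt]; push_cast; ring
      have h2 : (((q : ℤ) : ℝ) + 1) * (2 * del M) = pt M (2 * q + 2) := by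
        rw [pt]; push_cast; ring
      rw [h1, h2]
      exact Ico_subset_Ico (pt_mono (by omega)) (pt_mono (by omega))
    exact hf.2 (q : ℤ) x (hsub hxj) (pt M j) (hsub (mem_cell_self j))

/-- The sampled kernel. -/
def ksamp (Op : PDCZ M) (i j : ℕ) : ℝ := Op.K (pt M i) (pt M j)

/-- The finest tile containing cell `j`. -/
def ftile (M : ℕ) (j : ℕ) (hj : j < NN M) : Tile M :=
  mkTile M (2 * (j / 2)) 1 le_rfl (by omega) ⟨j / 2, by norm_num⟩
    (by
      have hNN : NN M = 2 ^ (2 * M) * 2 := by rw [NN, _root_.pow_succ]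
      have : j / 2 < 2 ^ (2 * M) := by omega
      omega)

lemma ftile_bk (j : ℕ) (hj : j < NN M) :
    (ftile M j hj).bk = Finset.Ico (2 * (j / 2)) (2 * (j / 2) + 2) := by
  rw [Tile.bk, ftile, mkTile_a, mkTile_e]
  norm_num

lemma mem_ftile_bk (j : ℕ) (hj : j < NN M) : j ∈ (ftile M j hj).bk := by
  rw [ftile_bk, Finset.mem_Ico]
  omega

lemma ftile_k (j : ℕ) (hj : j < NN M) : (ftile M j hj).k = -(M : ℤ) := by
  show (1 : ℤ) - ((M : ℤ) + 1) = -(M : ℤ)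
  ring

lemma ftile_disjoint {i j : ℕ} (hi : i < NN M) (hj : j < NN M) (hne : i / 2 ≠ j / 2) :
    Disjoint (ftile M i hi).ival (ftile M j hj).ival := by
  rw [ival_disjoint_iff, ftile_bk, ftile_bk, Finset.disjoint_left]
  intro x hx hx'
  rw [Finset.mem_Ico] at hx hx'
  omega

/-- The kernel is a fine step function on the base square. -/
lemma K_step (Op : PDCZ M) {i j : ℕ} (hi : i < NN M) (hj : j < NN M)
    {x y : ℝ} (hx : x ∈ cell M i) (hy : y ∈ cell M j) :
    Op.K x y = ksamp Op i j := by
  by_cases hsame : i / 2 = j / 2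
  · have hbk : j ∈ (ftile M i hi).bk := by
      rw [ftile_bk, Finset.mem_Ico]; omega
    have hxi : x ∈ (ftile M i hi).ival :=
      cell_subset_of_mem_bk (mem_ftile_bk i hi) hx
    have hyi : y ∈ (ftile M i hi).ival := cell_subset_of_mem_bk hbk hy
    have hpi : pt M i ∈ (ftile M i hi).ival :=
      cell_subset_of_mem_bk (mem_ftile_bk i hi) (mem_cell_self i)
    have hpj : pt M j ∈ (ftile M i hi).ival :=
      cell_subset_of_mem_bk hbk (mem_cell_self j)
    rw [Op.diag _ (ftile_k i hi) x hxi y hyi, ksamp,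
      Op.diag _ (ftile_k i hi) _ hpi _ hpj]
  · have hd := ftile_disjoint hi hj hsame
    have hxi : x ∈ (ftile M i hi).ival :=
      cell_subset_of_mem_bk (mem_ftile_bk i hi) hx
    have hyi : y ∈ (ftile M j hj).ival :=
      cell_subset_of_mem_bk (mem_ftile_bk j hj) hy
    have hpi : pt M i ∈ (ftile M i hi).ival :=
      cell_subset_of_mem_bk (mem_ftile_bk i hi) (mem_cell_self i)
    have hpj : pt M j ∈ (ftile M j hj).ival :=
      cell_subset_of_mem_bk (mem_ftile_bk j hj) (mem_cell_self j)
    calc Op.K x y = Op.K (pt M i) y := Op.perfectX _ _ hd x hxi (pt M i) hpi y hyi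
    _ = Op.K (pt M i) (pt M j) := Op.perfectY _ _ hd.symm y hyi (pt M j) hpj (pt M i) hpi

lemma app_eq (Op : PDCZ M) {g : ℝ → ℝ} (hg : SFun M g) {i : ℕ} (hi : i < NN M)
    {x : ℝ} (hx : x ∈ cell M i) :
    Op.app g x = del M * ∑ j ∈ Finset.range (NN M), ksamp Op i j * g (pt M j) := by
  have hS : SFun M (fun y => Op.K x y * g y) := by
    constructor
    · intro y hy
      show Op.K x y * g y = 0
      rw [hg.1 y hy]; ring
    · intro j hj y hyj
      show Op.K x y * g y = Op.K x (pt M j) * g (pt M j)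
      rw [K_step Op hi hj hx hyj, K_step Op hi hj hx (mem_cell_self j),
        hg.2 j hj y hyj]
  rw [PDCZ.app]
  rw [hS.integral]
  congr 1
  apply Finset.sum_congr rfl
  intro j hj
  rw [K_step Op hi (Finset.mem_range.mp hj) hx (mem_cell_self j)]

lemma appT_eq (Op : PDCZ M) {g : ℝ → ℝ} (hg : SFun M g) {i : ℕ} (hi : i < NN M)
    {x : ℝ} (hx : x ∈ cell M i) :
    Op.appT g x = del M * ∑ j ∈ Finset.range (NN M), ksamp Op j i * g (pt M j) := by
  have hS : SFun M (fun y => Op.K y x * g y) := by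
    constructor
    · intro y hy
      show Op.K y x * g y = 0
      rw [hg.1 y hy]; ring
    · intro j hj y hyj
      show Op.K y x * g y = Op.K (pt M j) x * g (pt M j)
      rw [K_step Op hj hi hyj hx, K_step Op hj hi (mem_cell_self j) hx,
        hg.2 j hj y hyj]
  rw [PDCZ.appT]
  rw [hS.integral]
  congr 1
  apply Finset.sum_congr rfl
  intro j hj
  rw [K_step Op (Finset.mem_range.mp hj) hi (mem_cell_self j) hx]

lemma Tile.a_mem_bk (P : Tile M) : P.a ∈ P.bk := by
  rw [Tile.bk, Finset.mem_Ico]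
  have : 0 < 2 ^ P.e := pow_pos (by norm_num) _
  omega

lemma ftile_e (j : ℕ) (hj : j < NN M) : (ftile M j hj).e = 1 := by
  rw [ftile, mkTile_e]

/-- If a cell is not in a tile's block, its finest tile is disjoint from the tile. -/
lemma disj_ftile {P : Tile M} {j : ℕ} (hj : j < NN M) (hjP : j ∉ P.bk) :
    Disjoint P.ival (ftile M j hj).ival := by
  rw [ival_disjoint_iff]
  rcases Tile.tri P (ftile M j hj) with h | h | h
  · exfalso
    have he : P.e ≤ 1 := by
      have := Tile.e_le_of_bk_subset h
      rw [ftile_e] at this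
      exact this
    have he1 : P.e = 1 := _root_.le_antisymm he P.e_pos
    rw [Tile.bk, ftile_bk, Finset.Ico_subset_Ico_iff (lt_add_pow _ _)] at h
    rw [he1] at h
    apply hjP
    rw [Tile.bk, Finset.mem_Ico, he1]
    omega
  · exfalso
    exact hjP (h (mem_ftile_bk j hj))
  · exact h

lemma ksamp_eq_right (Op : PDCZ M) {P : Tile M} {i i' j : ℕ} (hi : i ∈ P.bk)
    (hi' : i' ∈ P.bk) (hj : j < NN M) (hjP : j ∉ P.bk) :
    ksamp Op i j = ksamp Op i' j :=
  Op.perfectX P (ftile M j hj) (disj_ftile hj hjP) (pt M i) (mem_bk_iff.mp hi)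
    (pt M i') (mem_bk_iff.mp hi') (pt M j) (mem_bk_iff.mp (mem_ftile_bk j hj))

lemma ksamp_eq_left (Op : PDCZ M) {P : Tile M} {i i' j : ℕ} (hi : i ∈ P.bk)
    (hi' : i' ∈ P.bk) (hj : j < NN M) (hjP : j ∉ P.bk) :
    ksamp Op j i = ksamp Op j i' :=
  Op.perfectY P (ftile M j hj) (disj_ftile hj hjP) (pt M i) (mem_bk_iff.mp hi)
    (pt M i') (mem_bk_iff.mp hi') (pt M j) (mem_bk_iff.mp (mem_ftile_bk j hj))

lemma Tile.bk_eq_union (P : Tile M) : P.bk = P.bkL ∪ P.bkR := by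
  have h := two_pow_split P.e_pos
  ext i
  rw [Finset.mem_union, Tile.bk, Tile.bkL, Tile.bkR, Finset.mem_Ico, Finset.mem_Ico,
    Finset.mem_Ico]
  omega

lemma Tile.card_bkL (P : Tile M) : P.bkL.card = 2 ^ (P.e - 1) := by
  rw [Tile.bkL, Nat.card_Ico]
  generalize (2:ℕ) ^ (P.e - 1) = c
  omega

lemma Tile.card_bkR (P : Tile M) : P.bkR.card = 2 ^ (P.e - 1) := by
  rw [Tile.bkR, Nat.card_Ico]
  have h := two_pow_split P.e_pos
  generalize hc : (2:ℕ) ^ (P.e - 1) = c at h ⊢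
  generalize (2:ℕ) ^ P.e = b at h ⊢
  omega

lemma Tile.card_bk (P : Tile M) : P.bk.card = 2 ^ P.e := by
  rw [Tile.bk, Nat.card_Ico]
  generalize (2:ℕ) ^ P.e = c
  omega

lemma sum_hsamp (P : Tile M) : ∑ j ∈ P.bk, hsamp P j = 0 := by
  rw [P.bk_eq_union, Finset.sum_union P.bkL_disj_bkR,
    Finset.sum_eq_card_nsmul (fun j hj => hsamp_left hj),
    Finset.sum_eq_card_nsmul (fun j hj => hsamp_right hj),
    Tile.card_bkL, Tile.card_bkR]
  simp

/-- The discrete bilinear form of the operator. -/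
def BF (Op : PDCZ M) (u v : ℕ → ℝ) : ℝ :=
  ∑ i ∈ Finset.range (NN M), ∑ j ∈ Finset.range (NN M), ksamp Op i j * u j * v i

/-- The discrete bilinear form of the transposed operator. -/
def BFt (Op : PDCZ M) (u v : ℕ → ℝ) : ℝ :=
  ∑ i ∈ Finset.range (NN M), ∑ j ∈ Finset.range (NN M), ksamp Op j i * u j * v i

/-- Discrete wavelet coefficient. -/
def wd (u : ℕ → ℝ) (P : Tile M) : ℝ :=
  del M * ∑ j ∈ Finset.range (NN M), u j * hsamp P j

/-- Discrete tile average. -/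
def avd (u : ℕ → ℝ) (P : Tile M) : ℝ := (∑ j ∈ P.bk, u j) / 2 ^ P.e

lemma wd_eq_bk (u : ℕ → ℝ) (P : Tile M) :
    wd u P = del M * ∑ j ∈ P.bk, u j * hsamp P j := by
  rw [wd]
  congr 1
  rw [← Finset.sum_subset P.bk_subset_range
    (fun j _ hj => by show u j * hsamp P j = 0; rw [hsamp_zero hj, MulZeroClass.mul_zero])]

lemma del_mul_inv_sq (P : Tile M) :
    del M * ((Real.sqrt P.len)⁻¹ * (Real.sqrt P.len)⁻¹) = 1 / 2 ^ P.e := by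
  rw [← mul_inv, Real.mul_self_sqrt P.len_pos.le, P.len_eq, mul_inv]
  rw [show del M * ((2 ^ P.e : ℝ)⁻¹ * (del M)⁻¹) =
    (del M * (del M)⁻¹) * (2 ^ P.e : ℝ)⁻¹ by ring]
  rw [mul_inv_cancel₀ del_pos.ne', _root_.one_mul, one_div]

lemma wd_split (u : ℕ → ℝ) (Q : Tile M) :
    wd u Q = del M * (Real.sqrt Q.len)⁻¹ *
      ((∑ i ∈ Q.bkL, u i) - ∑ i ∈ Q.bkR, u i) := by
  rw [wd_eq_bk, Q.bk_eq_union, Finset.sum_union Q.bkL_disj_bkR]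
  have hL : ∑ j ∈ Q.bkL, u j * hsamp Q j =
      (∑ i ∈ Q.bkL, u i) * (Real.sqrt Q.len)⁻¹ := by
    rw [Finset.sum_mul]
    exact Finset.sum_congr rfl (fun j hj => by rw [hsamp_left hj])
  have hR : ∑ j ∈ Q.bkR, u j * hsamp Q j =
      (∑ i ∈ Q.bkR, u i) * (-(Real.sqrt Q.len)⁻¹) := by
    rw [Finset.sum_mul]
    exact Finset.sum_congr rfl (fun j hj => by rw [hsamp_right hj])
  rw [hL, hR]
  ring

noncomputable instance : DecidableEq (Tile M) := Classical.decEq _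

/-- The finset of subtiles of a tile. -/
def subtiles (Q : Tile M) : Finset (Tile M) :=
  Finset.univ.filter (fun P => P.bk ⊆ Q.bk)

lemma mem_subtiles {P Q : Tile M} : P ∈ subtiles Q ↔ P.bk ⊆ Q.bk := by
  simp [subtiles]

lemma Tile.lc_e (Q : Tile M) (h : 2 ≤ Q.e) : (Q.lc h).e = Q.e - 1 := by
  rw [Tile.lc, mkTile_e]

lemma Tile.rc_e (Q : Tile M) (h : 2 ≤ Q.e) : (Q.rc h).e = Q.e - 1 := by
  rw [Tile.rc, mkTile_e]

lemma subtiles_of_e_one {Q : Tile M} (h : Q.e = 1) : subtiles Q = {Q} := by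
  ext P
  rw [mem_subtiles, Finset.mem_singleton]
  constructor
  · intro hs
    by_contra hne
    have h1 := (Tile.bk_subset_half hs hne).1
    have h2 := P.e_pos
    omega
  · rintro rfl
    exact subset_rfl

lemma subtiles_split (Q : Tile M) (h : 2 ≤ Q.e) :
    subtiles Q = insert Q (subtiles (Q.lc h) ∪ subtiles (Q.rc h)) := by
  ext P
  rw [mem_subtiles, Finset.mem_insert, Finset.mem_union, mem_subtiles, mem_subtiles,
    Tile.lc_bk, Tile.rc_bk]
  constructor
  · intro hs
    by_cases hne : P = Q
    · exact Or.inl hne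
    · exact Or.inr ((Tile.bk_subset_half hs hne).2)
  · rintro (rfl | hL | hR)
    · exact subset_rfl
    · exact hL.trans Q.bkL_subset
    · exact hR.trans Q.bkR_subset

lemma Q_not_mem_children (Q : Tile M) (h : 2 ≤ Q.e) :
    Q ∉ subtiles (Q.lc h) ∪ subtiles (Q.rc h) := by
  intro hmem
  rw [Finset.mem_union, mem_subtiles, mem_subtiles] at hmem
  rcases hmem with hm | hm
  · have := Tile.e_le_of_bk_subset hm
    rw [Tile.lc_e] at this
    omega
  · have := Tile.e_le_of_bk_subset hm
    rw [Tile.rc_e] at this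
    omega

lemma children_disj (Q : Tile M) (h : 2 ≤ Q.e) :
    Disjoint (subtiles (Q.lc h)) (subtiles (Q.rc h)) := by
  rw [Finset.disjoint_left]
  intro P hP hP'
  rw [mem_subtiles, Tile.lc_bk] at hP
  rw [mem_subtiles, Tile.rc_bk] at hP'
  exact Finset.disjoint_left.mp Q.bkL_disj_bkR (hP P.a_mem_bk) (hP' P.a_mem_bk)

lemma avg_step_L (u : ℕ → ℝ) (Q : Tile M) {j : ℕ} (hj : j ∈ Q.bkL) :
    (∑ i ∈ Q.bk, u i) / 2 ^ Q.e + wd u Q * hsamp Q j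
      = (∑ i ∈ Q.bkL, u i) / 2 ^ (Q.e - 1) := by
  rw [hsamp_left hj, wd_split, Q.bk_eq_union, Finset.sum_union Q.bkL_disj_bkR]
  have key := del_mul_inv_sq Q
  have h2 : (2:ℝ) ^ Q.e = 2 * 2 ^ (Q.e - 1) := by
    rw [← pow_succ']
    congr 1
    have := Q.e_pos; omega
  have hmain : del M * (Real.sqrt Q.len)⁻¹ *
      ((∑ i ∈ Q.bkL, u i) - ∑ i ∈ Q.bkR, u i) * (Real.sqrt Q.len)⁻¹
      = ((∑ i ∈ Q.bkL, u i) - ∑ i ∈ Q.bkR, u i) * (1 / 2 ^ Q.e) := by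
    rw [← key]; ring
  rw [hmain, h2]
  have h2pos : (0:ℝ) < 2 ^ (Q.e - 1) := by positivity
  field_simp
  ring

lemma avg_step_R (u : ℕ → ℝ) (Q : Tile M) {j : ℕ} (hj : j ∈ Q.bkR) :
    (∑ i ∈ Q.bk, u i) / 2 ^ Q.e + wd u Q * hsamp Q j
      = (∑ i ∈ Q.bkR, u i) / 2 ^ (Q.e - 1) := by
  rw [hsamp_right hj, wd_split, Q.bk_eq_union, Finset.sum_union Q.bkL_disj_bkR]
  have key := del_mul_inv_sq Q
  have h2 : (2:ℝ) ^ Q.e = 2 * 2 ^ (Q.e - 1) := by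
    rw [← pow_succ']
    congr 1
    have := Q.e_pos; omega
  have hmain : del M * (Real.sqrt Q.len)⁻¹ *
      ((∑ i ∈ Q.bkL, u i) - ∑ i ∈ Q.bkR, u i) * (-(Real.sqrt Q.len)⁻¹)
      = -(((∑ i ∈ Q.bkL, u i) - ∑ i ∈ Q.bkR, u i) * (1 / 2 ^ Q.e)) := by
    rw [← key]; ring
  rw [hmain, h2]
  have h2pos : (0:ℝ) < 2 ^ (Q.e - 1) := by positivity
  field_simp
  ring

/-- Discrete Haar reconstruction on a tile. -/
lemma reconstruction (u : ℕ → ℝ) : ∀ n : ℕ, ∀ Q : Tile M, Q.e = n → ∀ j ∈ Q.bk,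
    u j = (∑ i ∈ Q.bk, u i) / 2 ^ Q.e + ∑ P ∈ subtiles Q, wd u P * hsamp P j := by
  intro n
  induction n using Nat.strong_induction_on with
  | _ n IH =>
    intro Q hQe j hj
    by_cases h1 : Q.e = 1
    · rw [subtiles_of_e_one h1, Finset.sum_singleton]
      rcases Tile.mem_bkL_or_bkR hj with hjh | hjh
      · rw [avg_step_L u Q hjh]
        have hja : j = Q.a := by
          have h' := hjh
          rw [Tile.bkL, h1, Finset.mem_Ico] at h'
          norm_num at h'
          omega
        have hbkL : Q.bkL = {j} := by
          ext i
          rw [Tile.bkL, h1, Finset.mem_Ico, Finset.mem_singleton]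
          norm_num
          omega
        rw [hbkL, Finset.sum_singleton, h1]
        norm_num
      · rw [avg_step_R u Q hjh]
        have hja : j = Q.a + 1 := by
          have h' := hjh
          rw [Tile.bkR, h1, Finset.mem_Ico] at h'
          norm_num at h'
          omega
        have hbkR : Q.bkR = {j} := by
          ext i
          rw [Tile.bkR, h1, Finset.mem_Ico, Finset.mem_singleton]
          norm_num
          omega
        rw [hbkR, Finset.sum_singleton, h1]
        norm_num
    · have h2 : 2 ≤ Q.e := by have := Q.e_pos; omega
      rw [subtiles_split Q h2, Finset.sum_insert (Q_not_mem_children Q h2),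
        Finset.sum_union (children_disj Q h2)]
      rcases Tile.mem_bkL_or_bkR hj with hjh | hjh
      · have hIH := IH (n - 1) (by omega) (Q.lc h2) (by rw [Tile.lc_e]; omega) j
          (by rw [Tile.lc_bk]; exact hjh)
        have hzero : ∑ P ∈ subtiles (Q.rc h2), wd u P * hsamp P j = 0 := by
          apply Finset.sum_eq_zero
          intro P hP
          rw [mem_subtiles, Tile.rc_bk] at hP
          have hnj : j ∉ P.bk :=
            fun hc => Finset.disjoint_left.mp Q.bkL_disj_bkR hjh (hP hc)
          rw [hsamp_zero hnj, MulZeroClass.mul_zero]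
        rw [hzero, _root_.add_zero, hIH, Tile.lc_bk, Tile.lc_e, ← avg_step_L u Q hjh]
        ring
      · have hIH := IH (n - 1) (by omega) (Q.rc h2) (by rw [Tile.rc_e]; omega) j
          (by rw [Tile.rc_bk]; exact hjh)
        have hzero : ∑ P ∈ subtiles (Q.lc h2), wd u P * hsamp P j = 0 := by
          apply Finset.sum_eq_zero
          intro P hP
          rw [mem_subtiles, Tile.lc_bk] at hP
          have hnj : j ∉ P.bk :=
            fun hc => Finset.disjoint_right.mp Q.bkL_disj_bkR hjh (hP hc)
          rw [hsamp_zero hnj, MulZeroClass.mul_zero]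
        rw [hzero, _root_.zero_add, hIH, Tile.rc_bk, Tile.rc_e, ← avg_step_R u Q hjh]
        ring

lemma BF_congr (Op : PDCZ M) {u v h : ℕ → ℝ} (huv : ∀ j < NN M, u j = v j) :
    BF Op u h = BF Op v h := by
  apply Finset.sum_congr rfl
  intro i _
  apply Finset.sum_congr rfl
  intro j hj
  rw [huv j (Finset.mem_range.mp hj)]

lemma BFt_congr (Op : PDCZ M) {u v h : ℕ → ℝ} (huv : ∀ j < NN M, u j = v j) :
    BFt Op u h = BFt Op v h := by
  apply Finset.sum_congr rfl
  intro i _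
  apply Finset.sum_congr rfl
  intro j hj
  rw [huv j (Finset.mem_range.mp hj)]

lemma BF_add (Op : PDCZ M) (u v h : ℕ → ℝ) :
    BF Op (fun j => u j + v j) h = BF Op u h + BF Op v h := by
  rw [BF, BF, BF, ← Finset.sum_add_distrib]
  apply Finset.sum_congr rfl
  intro i _
  rw [← Finset.sum_add_distrib]
  apply Finset.sum_congr rfl
  intro j _
  ring

lemma BF_smul (Op : PDCZ M) (c : ℝ) (u h : ℕ → ℝ) :
    BF Op (fun j => c * u j) h = c * BF Op u h := by
  rw [BF, BF, Finset.mul_sum]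
  apply Finset.sum_congr rfl
  intro i _
  rw [Finset.mul_sum]
  apply Finset.sum_congr rfl
  intro j _
  ring

lemma BF_sum (Op : PDCZ M) {ι : Type*} (s : Finset ι) (g : ι → ℕ → ℝ) (h : ℕ → ℝ) :
    BF Op (fun j => ∑ P ∈ s, g P j) h = ∑ P ∈ s, BF Op (g P) h := by
  rw [BF]
  have hinner : ∀ i ∈ Finset.range (NN M),
      ∑ j ∈ Finset.range (NN M), ksamp Op i j * (∑ P ∈ s, g P j) * h i
        = ∑ P ∈ s, ∑ j ∈ Finset.range (NN M), ksamp Op i j * g P j * h i := by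
    intro i _
    rw [Finset.sum_comm]
    apply Finset.sum_congr rfl
    intro j _
    rw [Finset.mul_sum, Finset.sum_mul]
  rw [Finset.sum_congr rfl hinner, Finset.sum_comm]
  rfl

/-- If `u` vanishes on the block of `Q` then `BF Op u (hsamp Q) = 0`. -/
lemma BF_vanish (Op : PDCZ M) (Q : Tile M) {u : ℕ → ℝ}
    (hu : ∀ j ∈ Q.bk, u j = 0) : BF Op u (hsamp Q) = 0 := by
  rw [BF]
  have h1 : ∀ i ∈ Finset.range (NN M),
      ∑ j ∈ Finset.range (NN M), ksamp Op i j * u j * hsamp Q i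
        = (∑ j ∈ Finset.range (NN M), ksamp Op i j * u j) * hsamp Q i := by
    intro i _
    rw [Finset.sum_mul]
  rw [Finset.sum_congr rfl h1]
  rw [← Finset.sum_subset Q.bk_subset_range
    (fun i _ hi => by rw [hsamp_zero hi, MulZeroClass.mul_zero])]
  have h2 : ∀ i ∈ Q.bk,
      (∑ j ∈ Finset.range (NN M), ksamp Op i j * u j) * hsamp Q i
        = (∑ j ∈ Finset.range (NN M), ksamp Op Q.a j * u j) * hsamp Q i := by
    intro i hi
    congr 1
    apply Finset.sum_congr rfl
    intro j hj
    by_cases hjb : j ∈ Q.bk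
    · rw [hu j hjb, MulZeroClass.mul_zero, MulZeroClass.mul_zero]
    · rw [ksamp_eq_right Op hi Q.a_mem_bk (Finset.mem_range.mp hj) hjb]
  rw [Finset.sum_congr rfl h2, ← Finset.mul_sum, sum_hsamp, MulZeroClass.mul_zero]

/-- For `i` outside the block of `P`, the row pairing with `hsamp P` vanishes. -/
lemma inner_vanish (Op : PDCZ M) (P : Tile M) {i : ℕ} (hi : i < NN M)
    (hiP : i ∉ P.bk) :
    ∑ j ∈ Finset.range (NN M), ksamp Op i j * hsamp P j = 0 := by
  rw [← Finset.sum_subset P.bk_subset_range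
    (fun j _ hj => by rw [hsamp_zero hj, MulZeroClass.mul_zero])]
  have h1 : ∀ j ∈ P.bk, ksamp Op i j * hsamp P j
      = ksamp Op i P.a * hsamp P j := by
    intro j hj
    rw [ksamp_eq_left Op hj P.a_mem_bk hi hiP]
  rw [Finset.sum_congr rfl h1, ← Finset.mul_sum, sum_hsamp, MulZeroClass.mul_zero]

lemma hsamp_const_on_sub {P Q : Tile M} (h : P.bk ⊆ Q.bkL ∨ P.bk ⊆ Q.bkR) {j : ℕ}
    (hj : j ∈ P.bk) : hsamp Q j = hsamp Q P.a := by
  rcases h with h | h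
  · rw [hsamp_left (h hj), hsamp_left (h P.a_mem_bk)]
  · rw [hsamp_right (h hj), hsamp_right (h P.a_mem_bk)]

lemma avd_hsamp_of_sub {P Q : Tile M} (h : P.bk ⊆ Q.bkL ∨ P.bk ⊆ Q.bkR) :
    avd (hsamp Q) P = hsamp Q P.a := by
  rw [avd, Finset.sum_eq_card_nsmul (fun j hj => hsamp_const_on_sub h hj),
    Tile.card_bk, nsmul_eq_mul]
  push_cast
  rw [_root_.mul_comm, mul_div_assoc, div_self (by positivity : ((2:ℝ) ^ P.e) ≠ 0), _root_.mul_one]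

lemma avd_hsamp_zero_of_disj {P Q : Tile M} (h : Disjoint P.bk Q.bk) :
    avd (hsamp Q) P = 0 := by
  rw [avd, Finset.sum_eq_zero, zero_div]
  intro j hj
  exact hsamp_zero (Finset.disjoint_left.mp h hj)

lemma avd_hsamp_zero_of_sup {P Q : Tile M} (h : Q.bk ⊆ P.bk) :
    avd (hsamp Q) P = 0 := by
  rw [avd, ← Finset.sum_subset h (fun j _ hj => hsamp_zero hj), sum_hsamp, zero_div]

/-- The key cross-term identity for a strict subtile. -/
lemma cross (Op : PDCZ M) {P Q : Tile M} (h : P.bk ⊆ Q.bkL ∨ P.bk ⊆ Q.bkR) :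
    BF Op (hsamp P) (hsamp Q) = BFt Op (fun _ => 1) (hsamp P) * avd (hsamp Q) P := by
  have hbkr := P.bk_subset_range
  -- LHS reduction
  have l1 : ∀ i ∈ Finset.range (NN M),
      ∑ j ∈ Finset.range (NN M), ksamp Op i j * hsamp P j * hsamp Q i
        = (∑ j ∈ Finset.range (NN M), ksamp Op i j * hsamp P j) * hsamp Q i := by
    intro i _
    rw [Finset.sum_mul]
  have l2 : BF Op (hsamp P) (hsamp Q)
      = ∑ i ∈ P.bk, (∑ j ∈ Finset.range (NN M), ksamp Op i j * hsamp P j) * hsamp Q i := by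
    rw [BF, Finset.sum_congr rfl l1]
    rw [← Finset.sum_subset hbkr
      (fun i hi hiP => by
        rw [inner_vanish Op P (Finset.mem_range.mp hi) hiP, MulZeroClass.zero_mul])]
  have l3 : BF Op (hsamp P) (hsamp Q)
      = (∑ i ∈ P.bk, ∑ j ∈ Finset.range (NN M), ksamp Op i j * hsamp P j)
          * hsamp Q P.a := by
    rw [l2, Finset.sum_mul]
    apply Finset.sum_congr rfl
    intro i hi
    rw [hsamp_const_on_sub h hi]
  -- RHS reduction
  have r1 : ∀ i ∈ Finset.range (NN M),
      ∑ j ∈ Finset.range (NN M), ksamp Op j i * (1:ℝ) * hsamp P i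
        = (∑ j ∈ Finset.range (NN M), ksamp Op j i) * hsamp P i := by
    intro i _
    rw [Finset.sum_mul]
    apply Finset.sum_congr rfl
    intro j _
    rw [_root_.mul_one]
  have r2 : BFt Op (fun _ => 1) (hsamp P)
      = ∑ i ∈ P.bk, (∑ j ∈ Finset.range (NN M), ksamp Op j i) * hsamp P i := by
    rw [BFt, Finset.sum_congr rfl r1]
    rw [← Finset.sum_subset hbkr
      (fun i _ hiP => by rw [hsamp_zero hiP, MulZeroClass.mul_zero])]
  -- exchange and split the `j` sum in r2
  have r3 : BFt Op (fun _ => 1) (hsamp P)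
      = ∑ j ∈ Finset.range (NN M), ∑ i ∈ P.bk, ksamp Op j i * hsamp P i := by
    rw [r2, Finset.sum_comm]
    apply Finset.sum_congr rfl
    intro j _
    rw [Finset.sum_mul]
  have r4 : ∀ j ∈ Finset.range (NN M), j ∉ P.bk →
      ∑ i ∈ P.bk, ksamp Op j i * hsamp P i = 0 := by
    intro j hj hjP
    have hc : ∀ i ∈ P.bk, ksamp Op j i * hsamp P i
        = ksamp Op j P.a * hsamp P i := by
      intro i hi
      rw [ksamp_eq_left Op hi P.a_mem_bk (Finset.mem_range.mp hj) hjP]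
    rw [Finset.sum_congr rfl hc, ← Finset.mul_sum, sum_hsamp, MulZeroClass.mul_zero]
  have r5 : BFt Op (fun _ => 1) (hsamp P)
      = ∑ j ∈ P.bk, ∑ i ∈ P.bk, ksamp Op j i * hsamp P i := by
    rw [r3, ← Finset.sum_subset hbkr r4]
  -- identify
  rw [l3, r5, avd_hsamp_of_sub h]
  congr 1
  have l4 : ∀ i ∈ P.bk,
      ∑ j ∈ Finset.range (NN M), ksamp Op i j * hsamp P j
        = ∑ j ∈ P.bk, ksamp Op i j * hsamp P j := by
    intro i _
    rw [← Finset.sum_subset hbkr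
      (fun j _ hj => by rw [hsamp_zero hj, MulZeroClass.mul_zero])]
  rw [Finset.sum_congr rfl l4]

theorem discrete_main (Op : PDCZ M) (u : ℕ → ℝ) (Q : Tile M) :
    BF Op u (hsamp Q)
      = BF Op (hsamp Q) (hsamp Q) * wd u Q
        + BF Op (fun _ => 1) (hsamp Q) * avd u Q
        + ∑ P ∈ (Finset.univ : Finset (Tile M)),
            BFt Op (fun _ => 1) (hsamp P) * wd u P * avd (hsamp Q) P := by
  set ind : ℕ → ℝ := fun j => if j ∈ Q.bk then 1 else 0 with hind
  set uout : ℕ → ℝ := fun j => if j ∈ Q.bk then 0 else u j with huout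
  have hdecomp : ∀ j, u j = uout j + (avd u Q * ind j
      + ∑ P ∈ subtiles Q, wd u P * hsamp P j) := by
    intro j
    by_cases hj : j ∈ Q.bk
    · simp only [huout, hind, if_pos hj]
      rw [_root_.zero_add, _root_.mul_one]
      exact reconstruction u Q.e Q rfl j hj
    · simp only [huout, hind, if_neg hj]
      have hz : ∑ P ∈ subtiles Q, wd u P * hsamp P j = 0 := by
        apply Finset.sum_eq_zero
        intro P hP
        rw [hsamp_zero (fun hc => hj (mem_subtiles.mp hP hc)), MulZeroClass.mul_zero]
      rw [hz, MulZeroClass.mul_zero, _root_.add_zero, _root_.add_zero]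
  have h0 : BF Op u (hsamp Q) = BF Op uout (hsamp Q)
      + (avd u Q * BF Op ind (hsamp Q)
        + ∑ P ∈ subtiles Q, wd u P * BF Op (hsamp P) (hsamp Q)) := by
    calc BF Op u (hsamp Q)
        = BF Op (fun j => uout j + (avd u Q * ind j
            + ∑ P ∈ subtiles Q, wd u P * hsamp P j)) (hsamp Q) :=
          BF_congr Op (fun j _ => hdecomp j)
      _ = _ := by
          rw [BF_add, BF_add, BF_smul, BF_sum]
          congr 2
          apply Finset.sum_congr rfl
          intro P _
          exact BF_smul Op _ _ _
  have h1 : BF Op uout (hsamp Q) = 0 :=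
    BF_vanish Op Q (fun j hj => by simp only [huout, if_pos hj])
  have h2 : BF Op ind (hsamp Q) = BF Op (fun _ => 1) (hsamp Q) := by
    have hone : BF Op (fun j => ind j + (1 - ind j)) (hsamp Q)
        = BF Op (fun _ => (1:ℝ)) (hsamp Q) :=
      BF_congr Op (fun j _ => by ring)
    rw [← hone, BF_add,
      BF_vanish Op Q (u := fun j => 1 - ind j)
        (fun j hj => by simp only [hind, if_pos hj]; ring), _root_.add_zero]
  have hQmem : Q ∈ subtiles Q := mem_subtiles.mpr subset_rfl
  have h3 : ∑ P ∈ subtiles Q, wd u P * BF Op (hsamp P) (hsamp Q)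
      = wd u Q * BF Op (hsamp Q) (hsamp Q)
        + ∑ P ∈ (subtiles Q).erase Q, wd u P * BF Op (hsamp P) (hsamp Q) := by
    rw [← Finset.add_sum_erase _ _ hQmem]
  have h4 : ∀ P ∈ (subtiles Q).erase Q,
      wd u P * BF Op (hsamp P) (hsamp Q)
        = BFt Op (fun _ => 1) (hsamp P) * wd u P * avd (hsamp Q) P := by
    intro P hP
    rw [Finset.mem_erase] at hP
    rw [cross Op ((Tile.bk_subset_half (mem_subtiles.mp hP.2) hP.1).2)]
    ring
  have h5 : ∑ P ∈ (Finset.univ : Finset (Tile M)),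
      BFt Op (fun _ => 1) (hsamp P) * wd u P * avd (hsamp Q) P
        = ∑ P ∈ (subtiles Q).erase Q,
            BFt Op (fun _ => 1) (hsamp P) * wd u P * avd (hsamp Q) P := by
    symm
    apply Finset.sum_subset (Finset.subset_univ _)
    intro P _ hP
    have hz : avd (hsamp Q) P = 0 := by
      by_cases hPQ : P = Q
      · subst hPQ; exact avd_hsamp_zero_of_sup subset_rfl
      · by_cases hsub : P.bk ⊆ Q.bk
        · exact absurd (Finset.mem_erase.mpr ⟨hPQ, mem_subtiles.mpr hsub⟩) hP
        · rcases Tile.tri P Q with h | h | h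
          · exact absurd h hsub
          · exact avd_hsamp_zero_of_sup h
          · exact avd_hsamp_zero_of_disj h
    rw [hz, MulZeroClass.mul_zero]
  rw [h0, h1, h2, h3, _root_.zero_add, h5, Finset.sum_congr rfl h4]
  ring

lemma waveCoeff_eq {g : ℝ → ℝ} (hg : SFun M g) (P : Tile M) :
    waveCoeff g P = wd (fun j => g (pt M j)) P := by
  rw [waveCoeff, (hg.mul (haar_sfun P)).integral, wd]
  rfl

lemma tileAvg_eq {g : ℝ → ℝ} (hg : SFun M g) (P : Tile M) :
    tileAvg g P = avd (fun j => g (pt M j)) P := by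
  rw [tileAvg, hg.setIntegral, P.len_eq, avd]
  rw [_root_.mul_comm ((2:ℝ) ^ P.e) (del M), mul_div_mul_left _ _ del_pos.ne']

lemma pair_app (Op : PDCZ M) {g : ℝ → ℝ} (hg : SFun M g) (P : Tile M) :
    ∫ x, Op.app g x * P.haar x
      = del M ^ 2 * BF Op (fun j => g (pt M j)) (hsamp P) := by
  have hS : SFun M (fun x => Op.app g x * P.haar x) := by
    constructor
    · intro x hx
      show Op.app g x * P.haar x = 0
      rw [Tile.haar_zero (fun h => hx (ival_subset_base P h)), MulZeroClass.mul_zero]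
    · intro i hi x hxi
      show Op.app g x * P.haar x = Op.app g (pt M i) * P.haar (pt M i)
      rw [app_eq Op hg hi hxi, app_eq Op hg hi (mem_cell_self i),
        haar_eq_hsamp hxi, hsamp]
  rw [hS.integral, BF, Finset.mul_sum, Finset.mul_sum]
  apply Finset.sum_congr rfl
  intro i hi
  show del M * (Op.app g (pt M i) * P.haar (pt M i))
      = del M ^ 2 * ∑ j ∈ Finset.range (NN M),
          ksamp Op i j * g (pt M j) * P.haar (pt M i)
  rw [app_eq Op hg (Finset.mem_range.mp hi) (mem_cell_self i), ← Finset.sum_mul]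
  ring

lemma pair_appT (Op : PDCZ M) {g : ℝ → ℝ} (hg : SFun M g) (P : Tile M) :
    ∫ x, Op.appT g x * P.haar x
      = del M ^ 2 * BFt Op (fun j => g (pt M j)) (hsamp P) := by
  have hS : SFun M (fun x => Op.appT g x * P.haar x) := by
    constructor
    · intro x hx
      show Op.appT g x * P.haar x = 0
      rw [Tile.haar_zero (fun h => hx (ival_subset_base P h)), MulZeroClass.mul_zero]
    · intro i hi x hxi
      show Op.appT g x * P.haar x = Op.appT g (pt M i) * P.haar (pt M i)
      rw [appT_eq Op hg hi hxi, appT_eq Op hg hi (mem_cell_self i),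
        haar_eq_hsamp hxi, hsamp]
  rw [hS.integral, BFt, Finset.mul_sum, Finset.mul_sum]
  apply Finset.sum_congr rfl
  intro i hi
  show del M * (Op.appT g (pt M i) * P.haar (pt M i))
      = del M ^ 2 * ∑ j ∈ Finset.range (NN M),
          ksamp Op j i * g (pt M j) * P.haar (pt M i)
  rw [appT_eq Op hg (Finset.mem_range.mp hi) (mem_cell_self i), ← Finset.sum_mul]
  ring

end Aux14

/-- Lemma 7.1: splitting of a perfect dyadic CZ operator. -/
theorem statement14 (M : ℕ) (Op : PDCZ M) (f : ℝ → ℝ) (hf : IsTestFun M f)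
    (Q : Tile M) :
    (∫ x, Op.app f x * Q.haar x) =
      (∫ x, Op.app Q.haar x * Q.haar x) * waveCoeff f Q +
      waveCoeff (Op.app (oneFn M)) Q * tileAvg f Q +
      ∑ᶠ P : Tile M, waveCoeff (Op.appT (oneFn M)) P * waveCoeff f P * tileAvg Q.haar P := by
  have hfS := testFun_sfun hf
  have hQs : (fun j => Q.haar (pt M j)) = hsamp Q := rfl
  have hone : ∀ j < NN M, (fun j => oneFn M (pt M j)) j = (fun _ => (1:ℝ)) j :=
    fun j hj => oneFn_pt hj
  rw [pair_app Op hfS Q, pair_app Op (haar_sfun Q) Q, hQs]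
  rw [show waveCoeff (Op.app (oneFn M)) Q
      = ∫ x, Op.app (oneFn M) x * Q.haar x from rfl,
    pair_app Op oneFn_sfun Q, BF_congr Op hone]
  rw [waveCoeff_eq hfS Q, tileAvg_eq hfS Q]
  rw [finsum_eq_sum_of_fintype]
  have hterm : ∀ P : Tile M,
      waveCoeff (Op.appT (oneFn M)) P * waveCoeff f P * tileAvg Q.haar P
        = del M ^ 2 * (BFt Op (fun _ => 1) (hsamp P)
            * wd (fun j => f (pt M j)) P * avd (hsamp Q) P) := by
    intro P
    rw [show waveCoeff (Op.appT (oneFn M)) P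
        = ∫ x, Op.appT (oneFn M) x * P.haar x from rfl,
      pair_appT Op oneFn_sfun P, BFt_congr Op hone,
      waveCoeff_eq hfS P, tileAvg_eq (haar_sfun Q) P, hQs]
    ring
  rw [Finset.sum_congr rfl (fun P _ => hterm P), ← Finset.mul_sum]
  have hmain := discrete_main Op (fun j => f (pt M j)) Q
  linear_combination (del M ^ 2) * hmain

end Dyadic
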